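/- The subgroup of SL(2,ℂ) generated by the three matrices a = [[i,0],[0,−i]], b = [[0,1],[−1,0]] and c = (1/2)·[[1+i, −1+i],[1+i, 1−i]] is isomorphic to SL(2, ℤ/3ℤ) (the binary tetrahedral group). In particular it has exactly 24 elements. -/

import Mathlib

set_option maxRecDepth 1000000
set_option maxHeartbeats 2000000

open Matrix Quaternion Complex
open scoped Quaternion

instance : DecidableEq ℍ[ℤ] := fun x y =>
  decidable_of_iff (x.re = y.re ∧ x.imI = y.imI ∧ x.imJ = y.imJ ∧ x.imK = y.imK)
    ⟨fun ⟨h1, h2, h3, h4⟩ => Quaternion.ext x y h1 h2 h3 h4,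
     fun h => by subst h; exact ⟨rfl, rfl, rfl, rfl⟩⟩

instance : DecidableEq (Matrix.SpecialLinearGroup (Fin 2) (ZMod 3)) := fun A B =>
  decidable_of_iff (A.1 = B.1) Subtype.ext_iff.symm

abbrev SL3 := Matrix.SpecialLinearGroup (Fin 2) (ZMod 3)

/-- Representation of integer quaternions as complex 2×2 matrices. -/
noncomputable def PhiZ : ℍ[ℤ] →+* Matrix (Fin 2) (Fin 2) ℂ where
  toFun q := !![(q.re : ℂ) + q.imI * I, (q.imJ : ℂ) + q.imK * I;
                -(q.imJ : ℂ) + q.imK * I, (q.re : ℂ) - q.imI * I]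
  map_one' := by ext i j; fin_cases i <;> fin_cases j <;> simp
  map_mul' x y := by
    ext i j
    fin_cases i <;> fin_cases j <;>
      simp [Matrix.mul_apply, Fin.sum_univ_two, Quaternion.re_mul, Quaternion.imI_mul,
        Quaternion.imJ_mul, Quaternion.imK_mul, Complex.ext_iff] <;> push_cast <;>
      ring_nf <;> simp
  map_zero' := by ext i j; fin_cases i <;> fin_cases j <;> simp
  map_add' x y := by
    ext i j; fin_cases i <;> fin_cases j <;> simp <;> push_cast <;> ring

lemma PhiZ_apply (q : ℍ[ℤ]) :
    PhiZ q = !![(q.re : ℂ) + q.imI * I, (q.imJ : ℂ) + q.imK * I;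
                -(q.imJ : ℂ) + q.imK * I, (q.re : ℂ) - q.imI * I] := rfl

lemma PhiZ_inj : Function.Injective PhiZ := by
  intro p q h
  have h00 := congrFun (congrFun h 0) 0
  have h01 := congrFun (congrFun h 0) 1
  simp only [PhiZ_apply, Matrix.cons_val_zero, Matrix.cons_val_one, Matrix.head_cons,
    Matrix.cons_val', Matrix.empty_val', Matrix.cons_val_fin_one, Matrix.head_fin_const] at h00 h01
  have e1 := congrArg Complex.re h00
  have e2 := congrArg Complex.im h00
  have e3 := congrArg Complex.re h01
  have e4 := congrArg Complex.im h01
  simp at e1 e2 e3 e4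
  exact Quaternion.ext p q (by exact_mod_cast e1) (by exact_mod_cast e2)
    (by exact_mod_cast e3) (by exact_mod_cast e4)

lemma detPhiZ (q : ℍ[ℤ]) :
    (PhiZ q).det = ((q.re ^ 2 + q.imI ^ 2 + q.imJ ^ 2 + q.imK ^ 2 : ℤ) : ℂ) := by
  simp only [PhiZ_apply, Matrix.det_fin_two_of]
  push_cast
  ring_nf
  simp [Complex.ext_iff]
  ring_nf
  constructor <;> trivial

def lft (t : ZMod 3) : ℤ := if t = 0 then 0 else if t = 1 then 1 else -1

/-- Twice the Hurwitz-unit quaternion corresponding to an element of `SL(2, ℤ/3)`. -/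
def Fq (A : SL3) : ℍ[ℤ] :=
  let m := (A : Matrix (Fin 2) (Fin 2) (ZMod 3))
  let x := -(m 0 0 + m 1 1)
  let y := -(m 1 0 - m 0 1)
  let s := -(m 0 1 + m 1 0)
  let d := m 0 0 - x
  let z := -(s + d)
  let w := -(s - d)
  if lft x ≠ 0 ∧ lft y ≠ 0 ∧ lft z ≠ 0 ∧ lft w ≠ 0 then
    ⟨-lft x, -lft y, -lft z, -lft w⟩
  else ⟨2 * lft x, 2 * lft y, 2 * lft z, 2 * lft w⟩

lemma Fq_mul : ∀ x y : SL3, Fq x * Fq y = 2 * Fq (x * y) := by decide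
lemma Fq_inj : ∀ x y : SL3, Fq x = Fq y → x = y := by decide
lemma Fq_norm : ∀ x : SL3,
    (Fq x).re ^ 2 + (Fq x).imI ^ 2 + (Fq x).imJ ^ 2 + (Fq x).imK ^ 2 = 4 := by decide
lemma Fq_one : Fq 1 = (show ℍ[ℤ] from ⟨2, 0, 0, 0⟩) := by decide

noncomputable def gmat (A : SL3) : Matrix (Fin 2) (Fin 2) ℂ := (1 / 2 : ℂ) • PhiZ (Fq A)

lemma det_gmat (A : SL3) : (gmat A).det = 1 := by
  rw [gmat, Matrix.det_smul, detPhiZ, Fq_norm A]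
  norm_num

/-- The homomorphism `SL(2, ℤ/3) →* SL(2, ℂ)`. -/
noncomputable def gSL : SL3 →* Matrix.SpecialLinearGroup (Fin 2) ℂ where
  toFun A := ⟨gmat A, det_gmat A⟩
  map_one' := by
    apply Subtype.ext
    show gmat 1 = 1
    rw [gmat, Fq_one, PhiZ_apply]
    ext i j
    fin_cases i <;> fin_cases j <;>
      simp [PhiZ_apply, Matrix.one_apply] <;> norm_num
  map_mul' x y := by
    apply Subtype.ext
    show gmat (x * y) = gmat x * gmat y
    rw [gmat, gmat, gmat, smul_mul_assoc, mul_smul_comm, smul_smul, ← _root_.map_mul, Fq_mul x y,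
      _root_.map_mul, map_ofNat, two_mul, ← two_smul ℂ, smul_smul]
    norm_num

lemma gSL_inj : Function.Injective gSL := by
  intro x y h
  have h1 : gmat x = gmat y := congrArg Subtype.val h
  have h2 : PhiZ (Fq x) = PhiZ (Fq y) :=
    smul_right_injective (Matrix (Fin 2) (Fin 2) ℂ) (by norm_num : (1 / 2 : ℂ) ≠ 0) h1
  exact Fq_inj x y (PhiZ_inj h2)

def A₀ : SL3 := ⟨!![0, 2; 1, 0], by decide⟩
def B₀ : SL3 := ⟨!![1, 1; 1, 2], by decide⟩
def C₀ : SL3 := ⟨!![1, 1; 2, 0], by decide⟩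

def gv : Fin 3 → SL3 := ![A₀, B₀, C₀]

def words : List (List (Fin 3)) :=
  [[], [0], [1], [2], [0,0], [0,1], [0,2], [1,0], [1,2], [2,0], [2,1], [2,2], [0,0,0],
   [0,0,1], [0,0,2], [0,2,0], [0,2,2], [1,0,2], [1,2,2], [2,0,2], [2,1,2], [2,2,0],
   [2,2,1], [0,0,2,2]]

lemma htop : Subgroup.closure {A₀, B₀, C₀} = (⊤ : Subgroup SL3) := by
  rw [eq_top_iff]
  intro x _
  have h : ∀ x : SL3, ∃ w ∈ words, (w.map gv).prod = x := by decide
  obtain ⟨w, -, rfl⟩ := h x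
  apply list_prod_mem
  intro g hg
  obtain ⟨i, -, rfl⟩ := List.mem_map.1 hg
  apply Subgroup.subset_closure
  fin_cases i <;> simp [gv]

lemma cardSL3 : Nat.card SL3 = 24 := by
  rw [Nat.card_eq_fintype_card]
  decide

theorem stmt_6 (a b c : Matrix.SpecialLinearGroup (Fin 2) ℂ)
    (ha : (a : Matrix (Fin 2) (Fin 2) ℂ) = !![Complex.I, 0; 0, -Complex.I])
    (hb : (b : Matrix (Fin 2) (Fin 2) ℂ) = !![0, 1; -1, 0])
    (hc : (c : Matrix (Fin 2) (Fin 2) ℂ) =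
      (1 / 2 : ℂ) • !![1 + Complex.I, -1 + Complex.I; 1 + Complex.I, 1 - Complex.I]) :
    Nonempty ((Subgroup.closure {a, b, c} : Subgroup (Matrix.SpecialLinearGroup (Fin 2) ℂ))
        ≃* Matrix.SpecialLinearGroup (Fin 2) (ZMod 3)) ∧
      Nat.card
        (Subgroup.closure {a, b, c} : Subgroup (Matrix.SpecialLinearGroup (Fin 2) ℂ)) = 24 := by
  have hga : gSL A₀ = a := by
    apply Subtype.ext
    show gmat A₀ = _
    rw [ha, gmat, show Fq A₀ = (show ℍ[ℤ] from ⟨0, 2, 0, 0⟩) from by decide, PhiZ_apply]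
    ext i j
    fin_cases i <;> fin_cases j <;> simp [PhiZ_apply] <;> norm_num
  have hgb : gSL B₀ = b := by
    apply Subtype.ext
    show gmat B₀ = _
    rw [hb, gmat, show Fq B₀ = (show ℍ[ℤ] from ⟨0, 0, 2, 0⟩) from by decide, PhiZ_apply]
    ext i j
    fin_cases i <;> fin_cases j <;> simp [PhiZ_apply] <;> norm_num
  have hgc : gSL C₀ = c := by
    apply Subtype.ext
    show gmat C₀ = _
    rw [hc, gmat, show Fq C₀ = (show ℍ[ℤ] from ⟨1, 1, -1, 1⟩) from by decide, PhiZ_apply]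
    ext i j
    fin_cases i <;> fin_cases j <;> simp [PhiZ_apply] <;> norm_num
  have hrange : gSL.range = Subgroup.closure {a, b, c} := by
    rw [MonoidHom.range_eq_map, ← htop, MonoidHom.map_closure]
    congr 1
    rw [Set.image_insert_eq, Set.image_insert_eq, Set.image_singleton, hga, hgb, hgc]
  have e := (MulEquiv.subgroupCongr hrange).symm.trans (MonoidHom.ofInjective gSL_inj).symm
  exact ⟨⟨e⟩, by rw [Nat.card_congr e.toEquiv, cardSL3]⟩
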